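/- Let T be a tournament with a minimal τ-retentive set R of size 3, and let R' be another minimal τ-retentive set of T. Suppose v ∈ R', S is a minimal τ-retentive set of T[N⁻_T(v)], and the directed domination graph of T[S] contains a directed cycle C. Then a contradiction follows; i.e., no such configuration exists. -/

import Mathlib

variable {V : Type}

/-- Inneighbors of `v` inside the subtournament on `s` (excluding `v` itself). -/
def inn [DecidableEq V] (r : V → V → Prop) [DecidableRel r] (s : Finset V) (v : V) :
    Finset V :=
  (s.filter fun u => r u v).erase v

lemma inn_card_lt [DecidableEq V] (r : V → V → Prop) [DecidableRel r]
    (s : Finset V) (v : V) (hv : v ∈ s) : (inn r s v).card < s.card := by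
  have h1 : inn r s v ⊆ s.erase v := by
    intro x hx
    rcases Finset.mem_erase.mp hx with ⟨hxv, hx2⟩
    exact Finset.mem_erase.mpr ⟨hxv, (Finset.mem_filter.mp hx2).1⟩
  calc (inn r s v).card ≤ (s.erase v).card := Finset.card_le_card h1
    _ < s.card := Finset.card_erase_lt_of_mem hv

/-- The tournament equilibrium set of the subtournament of `r` on `s`:
the union of all minimal τ-retentive sets. -/
def tau [DecidableEq V] (r : V → V → Prop) [DecidableRel r] (s : Finset V) : Set V :=
  {x | ∃ A : Finset V, x ∈ A ∧ A ⊆ s ∧ A.Nonempty ∧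
    (∀ v, v ∈ s → v ∈ A → ((inn r s v).Nonempty → tau r (inn r s v) ⊆ ↑A)) ∧
    ∀ B : Finset V, B ⊆ s → B ⊂ A →
      ¬ (B.Nonempty ∧
        ∀ v, v ∈ s → v ∈ B → ((inn r s v).Nonempty → tau r (inn r s v) ⊆ ↑B))}
termination_by s.card
decreasing_by
  all_goals exact inn_card_lt r s v (by assumption)

/-- `A` is a τ-retentive set of the tournament on `s`. -/
def Retentive [DecidableEq V] (r : V → V → Prop) [DecidableRel r] (s A : Finset V) : Prop :=
  A ⊆ s ∧ A.Nonempty ∧ ∀ v ∈ A, (inn r s v).Nonempty → tau r (inn r s v) ⊆ ↑A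

/-- `A` is a minimal τ-retentive set of the tournament on `s`. -/
def MinRetentive [DecidableEq V] (r : V → V → Prop) [DecidableRel r] (s A : Finset V) : Prop :=
  Retentive r s A ∧ ∀ B, Retentive r s B → B ⊆ A → B = A

/-- `r` is a tournament on the vertex set `s`. -/
def IsTournament (r : V → V → Prop) (s : Finset V) : Prop :=
  (∀ v ∈ s, ¬ r v v) ∧ ∀ u ∈ s, ∀ v ∈ s, u ≠ v → (r u v ↔ ¬ r v u)

/-- `u` is the captain of `v` in the subtournament on `s`:
`u` dominates `v` and all other inneighbors of `v`. -/
def IsCaptain (r : V → V → Prop) (s : Finset V) (u v : V) : Prop :=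
  u ∈ s ∧ v ∈ s ∧ r u v ∧ ∀ w ∈ s, w ≠ u → r w v → r u w

/-- The (undirected) domination graph of the subtournament on `s`. -/
def domGraph (r : V → V → Prop) (s : Finset V) : SimpleGraph V where
  Adj u v := (IsCaptain r s u v ∨ IsCaptain r s v u) ∧ u ≠ v
  symm := by
    constructor
    intro u v h
    exact ⟨h.1.symm, h.2.symm⟩
  loopless := by
    constructor
    intro u h
    exact h.2 rfl


section Helpers

variable [DecidableEq V] (r : V → V → Prop) [DecidableRel r]

lemma mem_inn {s : Finset V} {u z : V} :
    z ∈ inn r s u ↔ z ≠ u ∧ z ∈ s ∧ r z u := by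
  simp [inn, Finset.mem_erase, Finset.mem_filter, and_assoc]

lemma inn_subset {s : Finset V} {u : V} : inn r s u ⊆ s := by
  intro z hz
  exact ((mem_inn r).mp hz).2.1

lemma tau_subset {s : Finset V} : tau r s ⊆ ↑s := by
  intro x hx
  rw [tau] at hx
  obtain ⟨A, hxA, hAs, -⟩ := hx
  exact hAs hxA

lemma retentive_self {s : Finset V} (hs : s.Nonempty) : Retentive r s s :=
  ⟨subset_rfl, hs, fun u _ _ => (tau_subset r).trans
    (Finset.coe_subset.mpr (inn_subset r))⟩

lemma exists_minRetentive {s : Finset V} (hs : s.Nonempty) :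
    ∃ A, MinRetentive r s A := by
  classical
  have hne : (s.powerset.filter (fun A => Retentive r s A)).Nonempty := by
    exact ⟨s, Finset.mem_filter.mpr ⟨Finset.mem_powerset.mpr subset_rfl,
      retentive_self r hs⟩⟩
  obtain ⟨A, hA, hmin⟩ := Finset.exists_min_image _ Finset.card hne
  rw [Finset.mem_filter] at hA
  refine ⟨A, hA.2, fun B hB hBA => ?_⟩
  have hBm : B ∈ s.powerset.filter (fun A => Retentive r s A) :=
    Finset.mem_filter.mpr ⟨Finset.mem_powerset.mpr hB.1, hB⟩
  exact Finset.eq_of_subset_of_card_le hBA (hmin B hBm)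

lemma minRetentive_subset_tau {s A : Finset V} (h : MinRetentive r s A) :
    ↑A ⊆ tau r s := by
  intro x hx
  rw [tau]
  refine ⟨A, hx, h.1.1, h.1.2.1, fun u _ hu => h.1.2.2 u hu, ?_⟩
  intro B hBs hBA hB
  have hret : Retentive r s B := ⟨hBs, hB.1, fun u hu => hB.2 u (hBs hu) hu⟩
  exact hBA.2 ((h.2 B hret hBA.1) ▸ subset_rfl)

lemma mem_tau_exists {s : Finset V} {x : V} (hx : x ∈ tau r s) :
    ∃ A, MinRetentive r s A ∧ x ∈ A := by
  rw [tau] at hx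
  obtain ⟨A, hxA, hAs, hAne, hcl, hmin⟩ := hx
  refine ⟨A, ⟨⟨hAs, hAne, fun u hu => hcl u (hAs hu) hu⟩, ?_⟩, hxA⟩
  intro B hB hBA
  by_contra hne
  exact hmin B hB.1 (ssubset_of_subset_of_ne hBA hne)
    ⟨hB.2.1, fun u _ hu => hB.2.2 u hu⟩

lemma exists_minRetentive_tau {s : Finset V} (hs : s.Nonempty) :
    ∃ A, MinRetentive r s A ∧ ↑A ⊆ tau r s := by
  obtain ⟨A, hA⟩ := exists_minRetentive r hs
  exact ⟨A, hA, minRetentive_subset_tau r hA⟩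

lemma minRetentive_disjoint {s A B : Finset V} (hA : MinRetentive r s A)
    (hB : MinRetentive r s B) (hne : A ≠ B) {x : V} (hxA : x ∈ A) (hxB : x ∈ B) :
    False := by
  have hret : Retentive r s (A ∩ B) := by
    refine ⟨(Finset.inter_subset_left).trans hA.1.1, ⟨x, Finset.mem_inter.mpr ⟨hxA, hxB⟩⟩,
      fun u hu hne' => ?_⟩
    rw [Finset.mem_inter] at hu
    rw [Finset.coe_inter]
    exact Set.subset_inter (hA.1.2.2 u hu.1 hne') (hB.1.2.2 u hu.2 hne')
  have h1 := hA.2 _ hret Finset.inter_subset_left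
  have h2 := hB.2 _ hret Finset.inter_subset_right
  exact hne (h1.symm.trans h2)

/-- No vertex of a tournament dominates an entire retentive set. -/
lemma no_dom {s : Finset V} (hT : IsTournament r s) :
    ∀ m (X : Finset V), X.card ≤ m → X ⊆ s → ∀ A p, Retentive r X A → p ∈ X →
      (∀ z ∈ A, r p z) → False := by
  intro m
  induction m with
  | zero =>
    intro X hX _ A p hA _ _
    obtain ⟨z, hz⟩ := hA.2.1
    have : X = ∅ := Finset.card_eq_zero.mp (Nat.le_zero.mp hX)
    exact absurd (hA.1 hz) (by simp [this])
  | succ m ih =>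
    intro X hX hXs A p hA hp hdom
    obtain ⟨z, hz⟩ := hA.2.1
    have hzX : z ∈ X := hA.1 hz
    have hpz : p ≠ z := by
      rintro rfl
      exact hT.1 p (hXs hp) (hdom p hz)
    have hpinn : p ∈ inn r X z := (mem_inn r).mpr ⟨hpz, hp, hdom z hz⟩
    have hinne : (inn r X z).Nonempty := ⟨p, hpinn⟩
    obtain ⟨A', hA', hA'tau⟩ := exists_minRetentive_tau r hinne
    have hA'A : ∀ w ∈ A', w ∈ A := fun w hw => hA.2.2 z hz hinne (hA'tau hw)
    exact ih (inn r X z) (by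
        have := inn_card_lt r X z hzX
        omega)
      ((inn_subset r).trans hXs) A' p hA'.1 hpinn (fun w hw => hdom w (hA'A w hw))

end Helpers

theorem stmt17 [DecidableEq V] (r : V → V → Prop) [DecidableRel r] (s : Finset V)
    (hT : IsTournament r s) (R R2 : Finset V)
    (hR : MinRetentive r s R) (hcard : R.card = 3)
    (hR2 : MinRetentive r s R2) (hne : R2 ≠ R)
    (v : V) (hv : v ∈ R2) (S : Finset V) (hS : MinRetentive r (inn r s v) S)
    (n : ℕ) (hn : 0 < n) (c : Fin n → V) (hinj : Function.Injective c)
    (hcyc : ∀ i : Fin n, IsCaptain r S (c i) (c ⟨(i.val + 1) % n, Nat.mod_lt _ hn⟩)) :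
    False := by
  classical
  have hirr := hT.1
  have hiff := hT.2
  have asym : ∀ u ∈ s, ∀ w ∈ s, r u w → r w u → False := by
    intro u hu w hw h1 h2
    rcases eq_or_ne u w with rfl | hne'
    · exact hirr u hu h1
    · exact ((hiff u hu w hw hne').mp h1) h2
  have total : ∀ u ∈ s, ∀ w ∈ s, u ≠ w → ¬ r u w → r w u := by
    intro u hu w hw hne' h
    exact (hiff w hw u hu hne'.symm).mpr h
  have hRs : R ⊆ s := hR.1.1
  -- every element of R has an in-neighbour inside R
  have indeg : ∀ u ∈ R, ∃ z ∈ R, r z u := by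
    intro u hu
    by_contra hno
    push_neg at hno
    have hinn : inn r s u = ∅ := by
      by_contra hne'
      have hne2 : (inn r s u).Nonempty := Finset.nonempty_iff_ne_empty.mpr hne'
      obtain ⟨A, hA, hAtau⟩ := exists_minRetentive_tau r hne2
      obtain ⟨z, hz⟩ := hA.1.2.1
      have hzR : z ∈ R := hR.1.2.2 u hu hne2 (hAtau hz)
      have hzi := (mem_inn r).mp (hA.1.1 hz)
      exact hno z hzR hzi.2.2
    have hret : Retentive r s {u} := by
      refine ⟨Finset.singleton_subset_iff.mpr (hRs hu), Finset.singleton_nonempty u, ?_⟩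
      intro w hw hne'
      rw [Finset.mem_singleton] at hw
      subst hw
      rw [hinn] at hne'
      exact absurd hne' (by simp)
    have := hR.2 _ hret (Finset.singleton_subset_iff.mpr hu)
    rw [← this] at hcard
    simp at hcard
  -- extract a directed triangle x → y → z → x with R = {x, y, z}
  obtain ⟨a, b, d, hab, had, hbd, hRabc⟩ := Finset.card_eq_three.mp hcard
  have haR : a ∈ R := by rw [hRabc]; simp
  have hbR : b ∈ R := by rw [hRabc]; simp
  have hdR : d ∈ R := by rw [hRabc]; simp
  have has : a ∈ s := hRs haR
  have hbs : b ∈ s := hRs hbR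
  have hds : d ∈ s := hRs hdR
  have hmemR : ∀ z ∈ R, z = a ∨ z = b ∨ z = d := by
    intro z hz
    rw [hRabc] at hz
    simpa using hz
  have kill : ∀ u, u ∈ R → ¬ r a u → ¬ r b u → ¬ r d u → False := by
    intro u hu h1 h2 h3
    obtain ⟨z, hzR, hz⟩ := indeg u hu
    rcases hmemR z hzR with rfl | rfl | rfl
    exacts [h1 hz, h2 hz, h3 hz]
  have key : ∃ x y z : V, x ∈ R ∧ y ∈ R ∧ z ∈ R ∧
      r x y ∧ r y z ∧ r z x ∧ (∀ w ∈ R, w = x ∨ w = y ∨ w = z) := by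
    by_cases h1 : r a b
    · by_cases h2 : r b d
      · by_cases h3 : r d a
        · exact ⟨a, b, d, haR, hbR, hdR, h1, h2, h3, hmemR⟩
        · -- r a d : a is a source
          have h4 : r a d := total d hds a has (Ne.symm had) h3
          exact (kill a haR (hirr a has)
            (fun h => asym a has b hbs h1 h) (fun h => asym a has d hds h4 h)).elim
      · have h4 : r d b := total b hbs d hds hbd h2
        by_cases h3 : r d a
        · -- d is a source
          exact (kill d hdR (fun h => asym d hds a has h3 h)
            (fun h => asym d hds b hbs h4 h) (hirr d hds)).elim
        · have h5 : r a d := total d hds a has (Ne.symm had) h3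
          -- a is a source
          exact (kill a haR (hirr a has)
            (fun h => asym a has b hbs h1 h) (fun h => asym a has d hds h5 h)).elim
    · have h1' : r b a := total a has b hbs hab h1
      by_cases h2 : r b d
      · -- b is a source
        exact (kill b hbR (fun h => asym b hbs a has h1' h)
          (hirr b hbs) (fun h => asym b hbs d hds h2 h)).elim
      · have h4 : r d b := total b hbs d hds hbd h2
        by_cases h3 : r d a
        · -- d is a source
          exact (kill d hdR (fun h => asym d hds a has h3 h)
            (fun h => asym d hds b hbs h4 h) (hirr d hds)).elim
        · have h5 : r a d := total d hds a has (Ne.symm had) h3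
          exact ⟨b, a, d, hbR, haR, hdR, h1', h5, h4,
            fun w hw => by rcases hmemR w hw with rfl | rfl | rfl <;> tauto⟩
  obtain ⟨x, y, z, hxR, hyR, hzR, rxy, ryz, rzx, hcov⟩ := key
  have hxs : x ∈ s := hRs hxR
  have hys : y ∈ s := hRs hyR
  have hzs : z ∈ s := hRs hzR
  -- unique in-neighbour inside R
  have uniq : ∀ x' y' z' : V, x' ∈ s → y' ∈ s → z' ∈ s →
      r x' y' → r y' z' → r z' x' → (∀ w ∈ R, w = x' ∨ w = y' ∨ w = z') →
      ∀ w ∈ R, r w y' → w = x' := by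
    intro x' y' z' hx's hy's hz's h1 h2 h3 hc w hw hr
    rcases hc w hw with rfl | rfl | rfl
    · rfl
    · exact absurd hr (hirr w hy's)
    · exact absurd hr (fun h => asym y' hy's w hz's h2 h)
  have uq_y : ∀ w ∈ R, r w y → w = x := uniq x y z hxs hys hzs rxy ryz rzx hcov
  have uq_z : ∀ w ∈ R, r w z → w = y := uniq y z x hys hzs hxs ryz rzx rxy
    (fun w hw => by rcases hcov w hw with rfl | rfl | rfl <;> tauto)
  have uq_x : ∀ w ∈ R, r w x → w = z := uniq z x y hzs hxs hys rzx rxy ryz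
    (fun w hw => by rcases hcov w hw with rfl | rfl | rfl <;> tauto)
  -- no vertex of s dominates two consecutive triangle vertices
  have tri2 : ∀ x' y' : V, x' ∈ R → y' ∈ R → (∀ w ∈ R, r w y' → w = x') →
      ∀ w ∈ s, r w x' → r w y' → False := by
    intro x' y' hx'R hy'R huq w hws hwx hwy
    have hwy' : w ∈ inn r s y' :=
      (mem_inn r).mpr ⟨by rintro rfl; exact hirr w hws hwy, hws, hwy⟩
    have hne' : (inn r s y').Nonempty := ⟨w, hwy'⟩
    have htau := hR.1.2.2 y' hy'R hne'
    obtain ⟨A, hA, hAtau⟩ := exists_minRetentive_tau r hne'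
    have hdom : ∀ q ∈ A, r w q := by
      intro q hq
      have hqR : q ∈ R := htau (hAtau hq)
      have hq' := (mem_inn r).mp (hA.1.1 hq)
      have hqx : q = x' := huq q hqR hq'.2.2
      exact hqx ▸ hwx
    exact no_dom r hT (inn r s y').card _ le_rfl (inn_subset r) A w hA.1 hwy' hdom
  have t_xy : ∀ w ∈ s, r w x → r w y → False := tri2 x y hxR hyR uq_y
  have t_yz : ∀ w ∈ s, r w y → r w z → False := tri2 y z hyR hzR uq_z
  have t_zx : ∀ w ∈ s, r w z → r w x → False := tri2 z x hzR hxR uq_x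
  -- facts about v and S
  have hvs : v ∈ s := hR2.1.1 hv
  have hvR : v ∉ R := fun h => minRetentive_disjoint r hR2 hR hne hv h
  have hSsub : S ⊆ inn r s v := hS.1.1
  have hSne : S.Nonempty := hS.1.2.1
  have hinnne : (inn r s v).Nonempty := ⟨hSne.choose, hSsub hSne.choose_spec⟩
  have hSR2 : ∀ q ∈ S, q ∈ R2 :=
    fun q hq => hR2.1.2.2 v hv hinnne (minRetentive_subset_tau r hS hq)
  have hSs : S ⊆ s := hSsub.trans (inn_subset r)
  have hSnotR : ∀ q ∈ S, q ∉ R :=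
    fun q hq hqR => minRetentive_disjoint r hR2 hR hne (hSR2 q hq) hqR
  -- choose a triangle edge (p, q) with both endpoints beating v
  obtain ⟨p, q, hps, hqs, hpS, hqS, rpv, rqv, t_pq⟩ :
      ∃ p q : V, p ∈ s ∧ q ∈ s ∧ p ∉ S ∧ q ∉ S ∧ r p v ∧ r q v ∧
        (∀ w ∈ s, r w p → r w q → False) := by
    have hvx : v ≠ x := fun h => hvR (h ▸ hxR)
    have hvy : v ≠ y := fun h => hvR (h ▸ hyR)
    have hvz : v ≠ z := fun h => hvR (h ▸ hzR)
    have hxS : x ∉ S := fun h => hSnotR x h hxR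
    have hyS : y ∉ S := fun h => hSnotR y h hyR
    have hzS : z ∉ S := fun h => hSnotR z h hzR
    by_cases hva : r v x
    · have h1 : r y v := total v hvs y hys hvy (fun h => t_xy v hvs hva h)
      have h2 : r z v := total v hvs z hzs hvz (fun h => t_zx v hvs h hva)
      exact ⟨y, z, hys, hzs, hyS, hzS, h1, h2, t_yz⟩
    · have h1 : r x v := total v hvs x hxs hvx hva
      by_cases hvb : r v y
      · have h2 : r z v := total v hvs z hzs hvz (fun h => t_yz v hvs hvb h)
        exact ⟨z, x, hzs, hxs, hzS, hxS, h2, h1, t_zx⟩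
      · have h2 : r y v := total v hvs y hys hvy hvb
        exact ⟨x, y, hxs, hys, hxS, hyS, h1, h2, t_xy⟩
  -- cycle machinery
  rcases Nat.lt_or_ge n 2 with hn1 | hn2
  · -- n = 1 : a self-captain, contradiction with irreflexivity
    obtain rfl : n = 1 := by omega
    have h := hcyc ⟨0, hn⟩
    have he : (⟨(((⟨0, hn⟩ : Fin 1)).val + 1) % 1, Nat.mod_lt _ hn⟩ : Fin 1) = ⟨0, hn⟩ :=
      Subsingleton.elim _ _
    rw [he] at h
    exact hirr _ (hSs h.1) h.2.2.1
  set cc : ℕ → V := fun j => c ⟨j % n, Nat.mod_lt _ hn⟩ with hcc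
  have ccS : ∀ j, cc j ∈ S := fun j => (hcyc ⟨j % n, Nat.mod_lt _ hn⟩).1
  have ccs : ∀ j, cc j ∈ s := fun j => hSs (ccS j)
  have hcap : ∀ j : ℕ, IsCaptain r S (cc j) (cc (j + 1)) := by
    intro j
    have h := hcyc ⟨j % n, Nat.mod_lt _ hn⟩
    have he : (⟨((⟨j % n, Nat.mod_lt _ hn⟩ : Fin n).val + 1) % n, Nat.mod_lt _ hn⟩ : Fin n)
        = ⟨(j + 1) % n, Nat.mod_lt _ hn⟩ := by
      apply Fin.ext
      show (j % n + 1) % n = (j + 1) % n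
      conv_rhs => rw [Nat.add_mod]
      rw [Nat.mod_eq_of_lt hn2]
    rw [he] at h
    exact h
  have ccne : ∀ j k, 0 < k → k < n → cc j ≠ cc (j + k) := by
    intro j k hk0 hkn he
    have h1 : (⟨j % n, Nat.mod_lt _ hn⟩ : Fin n) = ⟨(j + k) % n, Nat.mod_lt _ hn⟩ := hinj he
    have h2 : j % n = (j + k) % n := congrArg Fin.val h1
    have h3 : n ∣ (j + k) - j := (Nat.modEq_iff_dvd' (Nat.le_add_right j k)).mp h2
    rw [Nat.add_sub_cancel_left] at h3
    have := Nat.le_of_dvd hk0 h3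
    omega
  have ccadd : ∀ j, cc (j + n) = cc j := by
    intro j
    show c _ = c _
    congr 1
    apply Fin.ext
    show (j + n) % n = j % n
    exact Nat.add_mod_right j n
  -- parity of arcs along the cycle (Fisher-type lemma)
  have par : ∀ k, 0 < k → k < n → ∀ j,
      (Odd k → r (cc j) (cc (j + k))) ∧ (Even k → r (cc (j + k)) (cc j)) := by
    intro k
    induction k with
    | zero => intro h; exact absurd h (lt_irrefl 0)
    | succ k ih =>
      intro _ hkn j
      rcases Nat.eq_zero_or_pos k with rfl | hk0
      · refine ⟨fun _ => (hcap j).2.2.1, fun hev => ?_⟩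
        rw [Nat.even_iff] at hev; omega
      · have hkn' : k < n := by omega
        constructor
        · intro hodd1
          have hkev : Even k := by
            rw [Nat.even_iff]; rw [Nat.odd_iff] at hodd1; omega
          have h1 : r (cc (j + 1 + k)) (cc (j + 1)) := (ih hk0 hkn' (j + 1)).2 hkev
          have hne1 : cc (j + 1 + k) ≠ cc j := by
            have h5 := ccne j (k + 1) (by omega) hkn
            rw [show j + (k + 1) = j + 1 + k by omega] at h5
            exact h5.symm
          have h2 := (hcap j).2.2.2 (cc (j + 1 + k)) (ccS _) hne1 h1
          rw [show j + (k + 1) = j + 1 + k by omega]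
          exact h2
        · intro hev1
          have hkodd : Odd k := by
            rw [Nat.odd_iff]; rw [Nat.even_iff] at hev1; omega
          have h1 : r (cc j) (cc (j + k)) := (ih hk0 hkn' j).1 hkodd
          by_contra hno
          have hne2 : cc j ≠ cc (j + (k + 1)) := ccne j (k + 1) (by omega) hkn
          have h2 : r (cc j) (cc (j + (k + 1))) :=
            total _ (ccs _) _ (ccs _) hne2.symm hno
          have hne3 : cc j ≠ cc (j + k) := ccne j k hk0 hkn'
          have h3 := (hcap (j + k)).2.2.2 (cc j) (ccS _) hne3 h2
          exact asym _ (ccs j) _ (ccs (j + k)) h1 h3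
  -- n must be odd
  have hodd : Odd n := by
    by_contra hodd
    have hev : Even n := Nat.not_odd_iff_even.mp hodd
    have h1 : Odd (n - 1) := by
      rw [Nat.odd_iff]; rw [Nat.even_iff] at hev; omega
    have h2 := (par (n - 1) (by omega) (by omega) 1).1 h1
    rw [show 1 + (n - 1) = n by omega] at h2
    rw [show n = 0 + n by omega, ccadd] at h2
    exact asym _ (ccs 0) _ (ccs 1) (hcap 0).2.2.1 h2
  -- no vertex of inn r s v dominates two adjacent vertices of the domination graph of S
  have adj : ∀ w ∈ inn r s v, ∀ u b' : V, IsCaptain r S u b' → r w u → r w b' → False := by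
    intro w hw u b' hcp hwu hwb
    obtain ⟨huS, hbS, hub, hcpt⟩ := hcp
    have hus : u ∈ s := hSs huS
    have hb's : b' ∈ s := hSs hbS
    have hws : w ∈ s := (inn_subset r) hw
    have hwD : w ∈ inn r (inn r s v) b' :=
      (mem_inn r).mpr ⟨by rintro rfl; exact hirr w hws hwb, hw, hwb⟩
    have hDne : (inn r (inn r s v) b').Nonempty := ⟨w, hwD⟩
    have htau := hS.1.2.2 b' hbS hDne
    obtain ⟨A, hA, hAtau⟩ := exists_minRetentive_tau r hDne
    have hAS : ∀ q' ∈ A, q' ∈ S := fun q' hq' => htau (hAtau hq')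
    have hDs : inn r (inn r s v) b' ⊆ s := (inn_subset r).trans (inn_subset r)
    by_cases huA : u ∈ A
    · have hwinn : w ∈ inn r (inn r (inn r s v) b') u :=
        (mem_inn r).mpr ⟨by rintro rfl; exact hirr w hws hwu, hwD, hwu⟩
      have h2 := hA.1.2.2 u huA ⟨w, hwinn⟩
      obtain ⟨A2, hA2, hA2tau⟩ := exists_minRetentive_tau r ⟨w, hwinn⟩
      obtain ⟨q', hq'⟩ := hA2.1.2.1
      have hqA : q' ∈ A := h2 (hA2tau hq')
      have hqinn := (mem_inn r).mp (hA2.1.1 hq')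
      have hqD := (mem_inn r).mp hqinn.2.1
      have hqz : r u q' := hcpt q' (hAS q' hqA) hqinn.1 hqD.2.2
      exact asym u hus q' (hSs (hAS q' hqA)) hqz hqinn.2.2
    · have hdom : ∀ q' ∈ A, r u q' := by
        intro q' hq'
        have hqD := (mem_inn r).mp (hA.1.1 hq')
        exact hcpt q' (hAS q' hq') (by rintro rfl; exact huA hq') hqD.2.2
      have huD : u ∈ inn r (inn r s v) b' :=
        (mem_inn r).mpr ⟨by rintro rfl; exact hirr u hus hub, hSsub huS, hub⟩
      exact no_dom r hT _ _ le_rfl hDs A u hA.1 huD hdom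
  -- the two chosen triangle vertices are in inn r s v
  have hpv : p ∈ inn r s v :=
    (mem_inn r).mpr ⟨fun h => hirr v hvs (h ▸ rpv), hps, rpv⟩
  have hqv : q ∈ inn r s v :=
    (mem_inn r).mpr ⟨fun h => hirr v hvs (h ▸ rqv), hqs, rqv⟩
  have indep_p : ∀ j, r p (cc j) → r p (cc (j + 1)) → False :=
    fun j h1 h2 => adj p hpv (cc j) (cc (j + 1)) (hcap j) h1 h2
  have indep_q : ∀ j, r q (cc j) → r q (cc (j + 1)) → False :=
    fun j h1 h2 => adj q hqv (cc j) (cc (j + 1)) (hcap j) h1 h2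
  have cover : ∀ j, r p (cc j) ∨ r q (cc j) := by
    intro j
    by_cases h1 : r p (cc j)
    · exact Or.inl h1
    · right
      by_contra h2
      have hpc : p ≠ cc j := fun h => hpS (h ▸ ccS j)
      have hqc : q ≠ cc j := fun h => hqS (h ▸ ccS j)
      have ha1 : r (cc j) p := total p hps _ (ccs j) hpc h1
      have ha2 : r (cc j) q := total q hqs _ (ccs j) hqc h2
      exact t_pq (cc j) (ccs j) ha1 ha2
  have main : ∀ p' q' : V, (∀ j, r p' (cc j) ∨ r q' (cc j)) →
      (∀ j, r p' (cc j) → r p' (cc (j + 1)) → False) →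
      (∀ j, r q' (cc j) → r q' (cc (j + 1)) → False) →
      r p' (cc 0) → False := by
    intro p' q' hcov' hip hiq h0
    have step : ∀ j, (Even j → r p' (cc j)) ∧ (Odd j → r q' (cc j)) := by
      intro j
      induction j with
      | zero =>
        refine ⟨fun _ => h0, fun h => ?_⟩
        rw [Nat.odd_iff] at h; omega
      | succ j ihj =>
        constructor
        · intro hev
          have hodd' : Odd j := by
            rw [Nat.odd_iff]; rw [Nat.even_iff] at hev; omega
          rcases hcov' (j + 1) with h | h
          · exact h
          · exact absurd h (fun h' => hiq j (ihj.2 hodd') h')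
        · intro hodd'
          have hev' : Even j := by
            rw [Nat.even_iff]; rw [Nat.odd_iff] at hodd'; omega
          rcases hcov' (j + 1) with h | h
          · exact absurd h (fun h' => hip j (ihj.1 hev') h')
          · exact h
    have hev1 : Even (n - 1) := by
      rw [Nat.even_iff]; rw [Nat.odd_iff] at hodd; omega
    have h1 : r p' (cc (n - 1)) := (step (n - 1)).1 hev1
    have h2 : cc (n - 1 + 1) = cc 0 := by
      rw [show n - 1 + 1 = n by omega, show n = 0 + n by omega, ccadd]
    exact hip (n - 1) h1 (h2.symm ▸ h0)
  rcases cover 0 with h0 | h0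
  · exact main p q cover indep_p indep_q h0
  · exact main q p (fun j => (cover j).symm) indep_q indep_p h0
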